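/- Fix S ⊆ {1,…,n} with |S| = k, suppose X_{-S}ᵀX_{-S} is invertible, and suppose the operator norm of M_S = X_S N⁻¹ X_Sᵀ is strictly less than 1. Then the Neumann series Σ_{m=0}^∞ M_S^m converges and the leave-S-out OLS estimator satisfies θ̂_{-S} = θ̂ + N⁻¹X_Sᵀ·(Σ_{m=0}^∞ M_S^m)·(X_S θ̂ − y_S). -/

import Mathlib

open Matrix Finset

noncomputable section

-- Equip square matrices with the `L∞` operator norm.
attribute [local instance] Matrix.linftyOpNormedRing Matrix.linftyOpNormedAddCommGroup

/-- The Gram matrix `X₋ₛᵀ X₋ₛ` of the rows of `X` outside `S`. -/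
def gramOut {n d : ℕ} (X : Matrix (Fin n) (Fin d) ℝ) (S : Finset (Fin n)) :
    Matrix (Fin d) (Fin d) ℝ :=
  ∑ i ∈ Sᶜ, vecMulVec (X i) (X i)

/-- The leave-`S`-out OLS estimator `θ̂₋ₛ = (X₋ₛᵀX₋ₛ)⁻¹ X₋ₛᵀ y₋ₛ`. -/
def olsOut {n d : ℕ} (X : Matrix (Fin n) (Fin d) ℝ) (y : Fin n → ℝ)
    (S : Finset (Fin n)) : Fin d → ℝ :=
  (gramOut X S)⁻¹ *ᵥ (∑ i ∈ Sᶜ, y i • X i)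

/-- The full OLS estimator `θ̂ = (XᵀX)⁻¹ Xᵀ y`. -/
def ols {n d : ℕ} (X : Matrix (Fin n) (Fin d) ℝ) (y : Fin n → ℝ) : Fin d → ℝ :=
  olsOut X y ∅

/-- The submatrix `Xₛ ∈ ℝ^{k×d}` stacking the rows of `X` indexed by `S`. -/
def rowsIn {n d : ℕ} (X : Matrix (Fin n) (Fin d) ℝ) (S : Finset (Fin n)) :
    Matrix {i // i ∈ S} (Fin d) ℝ :=
  Matrix.of fun i j => X i.1 j

/-- The subvector `yₛ ∈ ℝ^k` of the entries of `y` indexed by `S`. -/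
def entriesIn {n : ℕ} (y : Fin n → ℝ) (S : Finset (Fin n)) : {i // i ∈ S} → ℝ :=
  fun i => y i.1

lemma sum_vecMulVec_eq {n d : ℕ} (X : Matrix (Fin n) (Fin d) ℝ) (S : Finset (Fin n)) :
    (∑ i ∈ S, vecMulVec (X i) (X i)) = (rowsIn X S)ᵀ * rowsIn X S := by
  ext a b
  simp [rowsIn, Matrix.sum_apply, Matrix.mul_apply, vecMulVec_apply, mul_comm]
  rw [Finset.sum_attach S fun i => X i a * X i b]

lemma gramOut_eq {n d : ℕ} (X : Matrix (Fin n) (Fin d) ℝ) (S : Finset (Fin n)) :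
    gramOut X S = Xᵀ * X - (rowsIn X S)ᵀ * rowsIn X S := by
  have h := Finset.sum_compl_add_sum S (fun i => vecMulVec (X i) (X i))
  have hall : (∑ i : Fin n, vecMulVec (X i) (X i)) = Xᵀ * X := by
    ext a b
    simp [Matrix.sum_apply, Matrix.mul_apply, vecMulVec_apply, mul_comm]
  rw [gramOut, ← sum_vecMulVec_eq, ← hall, ← h]
  abel

lemma sum_smul_eq {n d : ℕ} (X : Matrix (Fin n) (Fin d) ℝ) (y : Fin n → ℝ) (S : Finset (Fin n)) :
    (∑ i ∈ S, y i • X i) = (rowsIn X S)ᵀ *ᵥ entriesIn y S := by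
  ext a
  simp [rowsIn, entriesIn, Matrix.mulVec, dotProduct, Finset.sum_apply]
  rw [Finset.sum_attach S fun i => X i a * y i]
  exact Finset.sum_congr rfl fun i _ => mul_comm _ _

/-- Neumann series expansion, Remark 3.3/Appendix A.4: if the
operator norm of `Mₛ = Xₛ N⁻¹ Xₛᵀ` is `< 1`, the Neumann series `∑ Mₛᵐ` converges and
`θ̂₋ₛ = θ̂ + N⁻¹Xₛᵀ (∑' m, Mₛᵐ) (Xₛθ̂ - yₛ)`. -/
theorem neumann_series_expansion
    (n d k : ℕ)
    (X : Matrix (Fin n) (Fin d) ℝ) (y : Fin n → ℝ)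
    (S : Finset (Fin n)) (hk : S.card = k)
    (hN : IsUnit (Xᵀ * X).det)
    (hout : IsUnit (gramOut X S).det)
    (hnorm : ‖rowsIn X S * (Xᵀ * X)⁻¹ * (rowsIn X S)ᵀ‖ < 1) :
    Summable (fun m : ℕ => (rowsIn X S * (Xᵀ * X)⁻¹ * (rowsIn X S)ᵀ) ^ m) ∧
    olsOut X y S = ols X y +
      ((Xᵀ * X)⁻¹ * (rowsIn X S)ᵀ *
        (∑' m : ℕ, (rowsIn X S * (Xᵀ * X)⁻¹ * (rowsIn X S)ᵀ) ^ m)) *ᵥ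
        (rowsIn X S *ᵥ ols X y - entriesIn y S) := by
  classical
  haveI : CompleteSpace (Matrix {i // i ∈ S} {i // i ∈ S} ℝ) :=
    (inferInstance : CompleteSpace ({i // i ∈ S} → {i // i ∈ S} → ℝ))
  haveI : HasSummableGeomSeries (Matrix {i // i ∈ S} {i // i ∈ S} ℝ) :=
    @instHasSummableGeomSeriesOfCompleteSpace _ _ this
  set B := rowsIn X S with hB
  set N := Xᵀ * X with hNdef
  set M := B * N⁻¹ * Bᵀ with hM
  have hsum : Summable fun m : ℕ => M ^ m := summable_geometric_of_norm_lt_one hnorm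
  refine ⟨hsum, ?_⟩
  set T := ∑' m : ℕ, M ^ m with hTdef
  have hT : (1 - M) * T = 1 := mul_neg_geom_series M hnorm
  -- basic invertibility facts
  have hNN : N * N⁻¹ = 1 := mul_nonsing_inv N hN
  have hGinv : (gramOut X S)⁻¹ * gramOut X S = 1 := nonsing_inv_mul _ hout
  -- notation
  set c := ∑ i : Fin n, y i • X i with hc
  set ys := entriesIn y S with hys
  have hols : ols X y = N⁻¹ *ᵥ c := by
    have h0 : gramOut X (∅ : Finset (Fin n)) = Xᵀ * X := by
      ext a b
      simp [gramOut, Matrix.sum_apply, Matrix.mul_apply, vecMulVec_apply, mul_comm]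
    simp [ols, olsOut, h0, hc, hNdef]
  set u := ols X y with hu
  set w := B *ᵥ u - ys with hw
  -- the right-hand side vector
  set rhs := u + (N⁻¹ * Bᵀ * T) *ᵥ w with hrhs
  -- key computation: (gramOut X S) *ᵥ rhs = c - Bᵀ *ᵥ ys
  have key : gramOut X S *ᵥ rhs = c - Bᵀ *ᵥ ys := by
    have hNu : N *ᵥ u = c := by
      rw [hols, mulVec_mulVec, hNN, one_mulVec]
    have h1 : N * (N⁻¹ * Bᵀ * T) = Bᵀ * T := by
      rw [← Matrix.mul_assoc, ← Matrix.mul_assoc, hNN, Matrix.one_mul]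
    have h2 : (Bᵀ * B) * (N⁻¹ * Bᵀ * T) = Bᵀ * (M * T) := by
      rw [hM]
      simp only [Matrix.mul_assoc]
    have h3 : Bᵀ * T - Bᵀ * (M * T) = Bᵀ := by
      have : Bᵀ * ((1 - M) * T) = Bᵀ := by rw [hT, Matrix.mul_one]
      calc Bᵀ * T - Bᵀ * (M * T) = Bᵀ * ((1 - M) * T) := by
            rw [Matrix.sub_mul, Matrix.one_mul, Matrix.mul_sub]
        _ = Bᵀ := this
    rw [gramOut_eq, ← hB, ← hNdef, hrhs]
    rw [Matrix.sub_mulVec, Matrix.mulVec_add, Matrix.mulVec_add,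
      mulVec_mulVec, mulVec_mulVec, h1, h2, hNu]
    have hBw : (Bᵀ * T) *ᵥ w - (Bᵀ * (M * T)) *ᵥ w = Bᵀ *ᵥ w := by
      rw [← Matrix.sub_mulVec, h3]
    have hBBu : (Bᵀ * B) *ᵥ u = Bᵀ *ᵥ (B *ᵥ u) := by rw [← mulVec_mulVec]
    have : c + (Bᵀ * T) *ᵥ w - ((Bᵀ * B) *ᵥ u + (Bᵀ * (M * T)) *ᵥ w)
        = c + ((Bᵀ * T) *ᵥ w - (Bᵀ * (M * T)) *ᵥ w) - (Bᵀ * B) *ᵥ u := by abel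
    rw [this, hBw, hBBu, hw, Matrix.mulVec_sub]
    abel
  have hb : (∑ i ∈ Sᶜ, y i • X i) = c - Bᵀ *ᵥ ys := by
    have h := Finset.sum_compl_add_sum S (fun i => y i • X i)
    rw [eq_sub_iff_add_eq, ← sum_smul_eq, h]
  rw [olsOut, hb, ← key, mulVec_mulVec, hGinv, one_mulVec, hrhs]
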